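/- Let K be a field, c ≥ 0, and let φ: G → F be a morphism of finitely generated free OI-modules over P = P^{OI,c}. Then the kernel of φ (the OI-submodule of G whose width-n component is ker φ_n) is generated by a finite subset, and such a finite generating set can be computed in finitely many steps. -/

import Mathlib

open MvPolynomial

/-- The width-`n` component `P^{OI,c}_n = K[x_{i,j} : i ∈ [c], j ∈ [n]]` of the
polynomial OI-algebra `P^{OI,c}`. -/
abbrev POI (K : Type) [Field K] (c n : ℕ) := MvPolynomial (Fin c × Fin n) K

/-- The structure map `P^{OI,c}(ε) : P^{OI,c}_m → P^{OI,c}_n`, `x_{i,j} ↦ x_{i,ε(j)}`,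
for an OI-morphism `ε : [m] ↪o [n]`. -/
noncomputable def POImap (K : Type) [Field K] (c : ℕ) {m n : ℕ}
    (ε : Fin m ↪o Fin n) : POI K c m →ₐ[K] POI K c n :=
  MvPolynomial.rename (fun p => (p.1, ε p.2))

/-- Width-`n` component of the finitely generated free OI-module
`⊕_{i=1}^r F^{OI,d_i}` over `P^{OI,c}`. -/
abbrev FreeOI (K : Type) [Field K] (c : ℕ) {r : ℕ} (d : Fin r → ℕ) (n : ℕ) : Type :=
  (Σ i : Fin r, Fin (d i) ↪o Fin n) →₀ POI K c n

/-- The structure map of the free OI-module `⊕ F^{OI,d_i}` along an OI-morphism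
`ε : [m] ↪o [n]`: `a e_{π,i} ↦ P^{OI,c}(ε)(a) e_{ε∘π,i}`. -/
noncomputable def freeOIMap (K : Type) [Field K] (c : ℕ) {r : ℕ} (d : Fin r → ℕ)
    {m n : ℕ} (ε : Fin m ↪o Fin n) (f : FreeOI K c d m) : FreeOI K c d n :=
  f.sum fun p a => Finsupp.single ⟨p.1, p.2.trans ε⟩ (POImap K c ε a)

open Finsupp
section OIAux

section Orders
variable {r : ℕ} {d : Fin r → ℕ} {c m n : ℕ}

abbrev BIdx (d : Fin r → ℕ) (n : ℕ) := Σ i : Fin r, Fin (d i) ↪o Fin n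
abbrev Expo (c n : ℕ) : Type := (Fin c × Fin n) →₀ ℕ
abbrev Mon (c : ℕ) (d : Fin r → ℕ) (n : ℕ) := BIdx d n × Expo c n

instance instFinOE (k n : ℕ) : Finite (Fin k ↪o Fin n) :=
  Finite.of_injective (fun π => (π : Fin k → Fin n)) DFunLike.coe_injective

noncomputable instance piLexLin (k n : ℕ) : LinearOrder (Lex (Fin k → Fin n)) :=
  Pi.Lex.linearOrder

abbrev BKeyT (d : Fin r → ℕ) (n : ℕ) := Lex (Σ i : Fin r, Lex (Fin (d i) → Fin n))
abbrev ExpoKeyT (c n : ℕ) := Lex ((Fin n ×ₗ Fin c) →₀ ℕ)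
abbrev MonKeyT (d : Fin r → ℕ) (c n : ℕ) := (BKeyT d n) ×ₗ (ExpoKeyT c n)

noncomputable example : LinearOrder (BKeyT d n) := inferInstance
noncomputable example : LinearOrder (MonKeyT d c n) := inferInstance

def eSwap (c n : ℕ) : (Fin c × Fin n) ≃ (Fin n ×ₗ Fin c) := (Equiv.prodComm _ _).trans toLex

noncomputable def expKey (u : Expo c n) : ExpoKeyT c n := toLex (Finsupp.equivCongrLeft (eSwap c n) u)

def bKey (b : BIdx d n) : BKeyT d n := toLex ⟨b.1, toLex (⇑b.2)⟩

noncomputable def monKey (x : Mon c d n) : MonKeyT d c n := toLex (bKey x.1, expKey x.2)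

lemma expKey_injective : Function.Injective (expKey (c := c) (n := n)) := fun u v h => by
  simpa [expKey] using (Finsupp.equivCongrLeft (eSwap c n)).injective (toLex.injective h)

lemma bKey_injective : Function.Injective (bKey (d := d) (n := n)) := by
  rintro ⟨i, π⟩ ⟨i', π'⟩ h
  simp only [bKey] at h
  have h2 := toLex.injective h
  obtain ⟨h3, h4⟩ := Sigma.mk.inj_iff.1 h2
  subst h3
  simp only [heq_eq_eq] at h4
  have : π = π' := DFunLike.coe_injective (toLex.injective h4)
  rw [this]

lemma monKey_injective : Function.Injective (monKey (c := c) (d := d) (n := n)) := by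
  rintro ⟨b, u⟩ ⟨b', u'⟩ h
  have h2 := toLex.injective h
  have hb := congrArg Prod.fst h2
  have hu := congrArg Prod.snd h2
  simp only at hb hu
  exact Prod.ext (bKey_injective hb) (expKey_injective hu)

noncomputable instance monLO : LinearOrder (Mon c d n) := LinearOrder.lift' monKey monKey_injective

lemma mon_lt_iff {x y : Mon c d n} : x < y ↔ monKey x < monKey y := by exact Iff.rfl
lemma mon_le_iff {x y : Mon c d n} : x ≤ y ↔ monKey x ≤ monKey y := by exact Iff.rfl

instance monWF : WellFoundedLT (Mon c d n) := by
  haveI h1 : WellFoundedLT (ExpoKeyT c n) := Finsupp.Lex.wellFoundedLT_of_finite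
  haveI h2 : WellFoundedLT (BKeyT d n) := Finite.to_wellFoundedLT
  constructor
  exact Subrelation.wf (fun {x y} h => mon_lt_iff.1 h) (InvImage.wf monKey IsWellFounded.wf)

end Orders

section MapMono
variable {α β : Type*} [LinearOrder α] [LinearOrder β]

lemma mapDomain_lex_lt {g : α → β} (hg : StrictMono g) {u v : α →₀ ℕ}
    (h : Finsupp.Lex (· < ·) (· < ·) u v) :
    Finsupp.Lex (· < ·) (· < ·) (mapDomain g u) (mapDomain g v) := by
  obtain ⟨j, hj, hlt⟩ := Finsupp.lex_def.1 h
  refine Finsupp.lex_def.2 ⟨g j, fun b hb => ?_, ?_⟩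
  · by_cases hbr : b ∈ Set.range g
    · obtain ⟨a, rfl⟩ := hbr
      rw [mapDomain_apply hg.injective, mapDomain_apply hg.injective, hj a (hg.lt_iff_lt.1 hb)]
    · rw [mapDomain_notin_range _ _ hbr, mapDomain_notin_range _ _ hbr]
  · rw [mapDomain_apply hg.injective, mapDomain_apply hg.injective]; exact hlt

lemma lex_lt_iff' {u v : α →₀ ℕ} : toLex u < toLex v ↔ Finsupp.Lex (· < ·) (· < ·) u v := by
  exact Iff.rfl

lemma pi_lex_lt {k : ℕ} {f g : Fin k → α} :
    toLex f < toLex g ↔ ∃ i, (∀ j, j < i → f j = g j) ∧ f i < g i := by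
  exact Iff.rfl

end MapMono

section Maps
variable {r : ℕ} {d : Fin r → ℕ} {c m n : ℕ}

/-- variable renaming along `ε`. -/
def embE (c : ℕ) (ε : Fin m ↪o Fin n) : Fin c × Fin m → Fin c × Fin n := fun p => (p.1, ε p.2)

lemma embE_injective (ε : Fin m ↪o Fin n) : Function.Injective (embE c ε) := by
  rintro ⟨i, j⟩ ⟨i', j'⟩ h
  simp only [embE, Prod.mk.injEq] at h
  exact Prod.ext h.1 (ε.injective h.2)

noncomputable def expMap (c : ℕ) (ε : Fin m ↪o Fin n) (u : Expo c m) : Expo c n :=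
  mapDomain (embE c ε) u

def bMap (d : Fin r → ℕ) (ε : Fin m ↪o Fin n) (b : BIdx d m) : BIdx d n := ⟨b.1, b.2.trans ε⟩

noncomputable def monMap (ε : Fin m ↪o Fin n) (x : Mon c d m) : Mon c d n :=
  (bMap d ε x.1, expMap c ε x.2)

/-- `ε` acting on the lexified column-major index pairs. -/
def embL (c : ℕ) (ε : Fin m ↪o Fin n) : (Fin m ×ₗ Fin c) → (Fin n ×ₗ Fin c) :=
  fun q => toLex (ε (ofLex q).1, (ofLex q).2)

lemma embL_strictMono (ε : Fin m ↪o Fin n) : StrictMono (embL c ε) := by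
  intro a b hab
  rw [show a = toLex (ofLex a) from rfl, show b = toLex (ofLex b) from rfl,
    Prod.Lex.lt_iff] at hab
  rcases hab with h | ⟨h1, h2⟩
  · exact Prod.Lex.lt_iff.2 (Or.inl (ε.strictMono h))
  · exact Prod.Lex.lt_iff.2 (Or.inr ⟨congrArg ε h1, h2⟩)

lemma expKey_eq (u : Expo c n) : expKey u = toLex (mapDomain (eSwap c n) u) := by
  unfold expKey
  rw [Finsupp.equivCongrLeft_apply, Finsupp.equivMapDomain_eq_mapDomain]

lemma expKey_expMap (ε : Fin m ↪o Fin n) (u : Expo c m) :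
    expKey (expMap c ε u) = toLex (mapDomain (embL c ε) (mapDomain (eSwap c m) u)) := by
  rw [expKey_eq, expMap, ← mapDomain_comp, ← mapDomain_comp]
  rfl

lemma expKey_lt_expMap (ε : Fin m ↪o Fin n) {u v : Expo c m} (h : expKey u < expKey v) :
    expKey (expMap c ε u) < expKey (expMap c ε v) := by
  rw [expKey_eq, expKey_eq] at h
  rw [expKey_expMap, expKey_expMap]
  exact lex_lt_iff'.2 (mapDomain_lex_lt (embL_strictMono ε) (lex_lt_iff'.1 h))

lemma expKey_add (u v : Expo c n) : expKey (u + v) = expKey u + expKey v := by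
  unfold expKey
  have h : equivMapDomain (eSwap c n) (u + v) =
      equivMapDomain (eSwap c n) u + equivMapDomain (eSwap c n) v := by
    ext b; simp [Finsupp.equivMapDomain_apply]
  rw [Finsupp.equivCongrLeft_apply, Finsupp.equivCongrLeft_apply, Finsupp.equivCongrLeft_apply, h]
  rfl

lemma bKey_bMap_lt (ε : Fin m ↪o Fin n) {b b' : BIdx d m} (h : bKey b < bKey b') :
    bKey (bMap d ε b) < bKey (bMap d ε b') := by
  obtain ⟨i, π⟩ := b
  obtain ⟨i', π'⟩ := b'
  have h' : Sigma.Lex (· < ·) (fun _ => (· < ·))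
      (⟨i, toLex ⇑π⟩ : Σ j, Lex (Fin (d j) → Fin m)) ⟨i', toLex ⇑π'⟩ := h
  show Sigma.Lex (· < ·) (fun _ => (· < ·))
      (⟨i, toLex ⇑(π.trans ε)⟩ : Σ j, Lex (Fin (d j) → Fin n)) ⟨i', toLex ⇑(π'.trans ε)⟩
  cases h' with
  | left _ _ h1 => exact Sigma.Lex.left _ _ h1
  | right _ _ h2 =>
    refine Sigma.Lex.right _ _ ?_
    obtain ⟨j, hj, hlt⟩ := pi_lex_lt.1 h2
    exact pi_lex_lt.2 ⟨j, fun j' hj' => congrArg ε (hj j' hj'), ε.strictMono hlt⟩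

lemma monMap_strictMono (ε : Fin m ↪o Fin n) : StrictMono (monMap (c := c) (d := d) ε) := by
  intro x y h
  rw [mon_lt_iff, monKey, monKey, Prod.Lex.toLex_lt_toLex] at h ⊢
  rcases h with h | ⟨h1, h2⟩
  · exact Or.inl (bKey_bMap_lt ε h)
  · refine Or.inr ⟨?_, ?_⟩
    · simp only [monMap]
      rw [show x.1 = y.1 from bKey_injective h1]
    · exact expKey_lt_expMap ε h2

lemma mon_lt_shift {b b' : BIdx d n} {u v : Expo c n} (w : Expo c n)
    (h : ((b, u) : Mon c d n) < (b', v)) : ((b, w + u) : Mon c d n) < (b', w + v) := by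
  rw [mon_lt_iff, monKey, monKey, Prod.Lex.toLex_lt_toLex] at h ⊢
  rcases h with h | ⟨h1, h2⟩
  · exact Or.inl h
  · refine Or.inr ⟨h1, ?_⟩
    simp only [expKey_add]
    exact (add_lt_add_iff_left _).2 h2

end Maps

section Coeffs
variable {K : Type} [Field K] {c : ℕ} {r : ℕ} {d : Fin r → ℕ} {m n : ℕ}

noncomputable def mcoeff (x : Mon c d n) (f : FreeOI K c d n) : K := (f x.1).coeff x.2

lemma mcoeff_sub (x : Mon c d n) (f g : FreeOI K c d n) :
    mcoeff x (f - g) = mcoeff x f - mcoeff x g := by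
  simp [mcoeff, Finsupp.sub_apply, MvPolynomial.coeff_sub]

lemma mcoeff_add (x : Mon c d n) (f g : FreeOI K c d n) :
    mcoeff x (f + g) = mcoeff x f + mcoeff x g := by
  simp [mcoeff, Finsupp.add_apply, MvPolynomial.coeff_add]

noncomputable def msupp (f : FreeOI K c d n) : Finset (Mon c d n) :=
  f.support.biUnion fun b => (f b).support.image fun u => ((b, u) : Mon c d n)

lemma mem_msupp {x : Mon c d n} {f : FreeOI K c d n} : x ∈ msupp f ↔ mcoeff x f ≠ 0 := by
  classical
  constructor
  · intro hx
    obtain ⟨b, hb, hx2⟩ := Finset.mem_biUnion.1 hx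
    obtain ⟨u, hu, rfl⟩ := Finset.mem_image.1 hx2
    simpa [mcoeff] using MvPolynomial.mem_support_iff.1 hu
  · intro hx
    refine Finset.mem_biUnion.2 ⟨x.1, ?_, Finset.mem_image.2 ⟨x.2, ?_, rfl⟩⟩
    · rw [Finsupp.mem_support_iff]
      intro h0
      exact hx (by simp [mcoeff, h0])
    · exact MvPolynomial.mem_support_iff.2 hx

lemma msupp_nonempty {f : FreeOI K c d n} (hf : f ≠ 0) : (msupp f).Nonempty := by
  obtain ⟨b, hb⟩ := Finsupp.ne_iff.1 hf
  rw [Finsupp.coe_zero, Pi.zero_apply] at hb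
  obtain ⟨u, hu⟩ := MvPolynomial.ne_zero_iff.1 hb
  exact ⟨(b, u), mem_msupp.2 hu⟩

noncomputable def lmon (f : FreeOI K c d n) (hf : f ≠ 0) : Mon c d n :=
  (msupp f).max' (msupp_nonempty hf)

lemma lmon_mem {f : FreeOI K c d n} (hf : f ≠ 0) : lmon f hf ∈ msupp f :=
  Finset.max'_mem _ _

lemma mcoeff_lmon {f : FreeOI K c d n} (hf : f ≠ 0) : mcoeff (lmon f hf) f ≠ 0 :=
  mem_msupp.1 (lmon_mem hf)

lemma le_lmon {f : FreeOI K c d n} (hf : f ≠ 0) {x : Mon c d n} (hx : x ∈ msupp f) :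
    x ≤ lmon f hf := Finset.le_max' _ _ hx

lemma max'_eq_of_eq {α : Type*} [LinearOrder α] {s t : Finset α} (h : s = t)
    (hs : s.Nonempty) : s.max' hs = t.max' (h ▸ hs) := by subst h; rfl

lemma lmon_map_eq {f : FreeOI K c d m} {g : FreeOI K c d n} (hf : f ≠ 0) (hg : g ≠ 0)
    {F : Mon c d m → Mon c d n} (hF : Monotone F) (hsupp : msupp g = (msupp f).image F) :
    lmon g hg = F (lmon f hf) := by
  apply le_antisymm
  · obtain ⟨y, hy, hyx⟩ := Finset.mem_image.1 (by rw [← hsupp]; exact lmon_mem hg)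
    rw [← hyx]
    exact hF (le_lmon hf hy)
  · apply le_lmon hg
    rw [hsupp]
    exact Finset.mem_image_of_mem F (lmon_mem hf)

lemma lmon_sub_lt {f g : FreeOI K c d n} (hf : f ≠ 0) (hg : g ≠ 0) (hne : f ≠ g)
    (hl : lmon f hf = lmon g hg) (hc : mcoeff (lmon f hf) f = mcoeff (lmon g hg) g) :
    lmon (f - g) (sub_ne_zero.2 hne) < lmon f hf := by
  have hmem : lmon (f - g) (sub_ne_zero.2 hne) ∈ msupp (f - g) := lmon_mem _
  set x := lmon (f - g) (sub_ne_zero.2 hne) with hxdef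
  have hne2 : mcoeff x (f - g) ≠ 0 := mem_msupp.1 hmem
  have hxne : x ≠ lmon f hf := by
    intro h
    apply hne2
    rw [mcoeff_sub, h, hc, hl, sub_self]
  have hle : x ≤ lmon f hf := by
    have h2 : mcoeff x f ≠ 0 ∨ mcoeff x g ≠ 0 := by
      by_contra h
      push_neg at h
      exact hne2 (by rw [mcoeff_sub, h.1, h.2, sub_zero])
    rcases h2 with h2 | h2
    · exact le_lmon hf (mem_msupp.2 h2)
    · rw [hl]
      exact le_lmon hg (mem_msupp.2 h2)
  exact lt_of_le_of_ne hle hxne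

lemma bMap_injective (ε : Fin m ↪o Fin n) : Function.Injective (bMap d ε) := by
  rintro ⟨i, π⟩ ⟨i', π'⟩ h
  simp only [bMap] at h
  obtain ⟨h1, h2⟩ := Sigma.mk.inj_iff.1 h
  subst h1
  simp only [heq_eq_eq] at h2
  have : π = π' :=
    DFunLike.coe_injective (funext fun j => ε.injective (DFunLike.congr_fun h2 j))
  rw [this]

lemma freeOIMap_apply_bMap (ε : Fin m ↪o Fin n) (f : FreeOI K c d m) (b : BIdx d m) :
    (freeOIMap K c d ε f) (bMap d ε b) = rename (embE c ε) (f b) := by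
  classical
  rw [freeOIMap, Finsupp.sum_apply, Finsupp.sum]
  by_cases hb : b ∈ f.support
  · rw [Finset.sum_eq_single_of_mem b hb]
    · rw [Finsupp.single_apply]
      split_ifs with hc
      · rfl
      · exact absurd rfl hc
    · intro p _ hpb
      rw [Finsupp.single_apply]
      split_ifs with hc
      · exact absurd (bMap_injective ε hc) hpb
      · rfl
  · have h0 : f b = 0 := Finsupp.notMem_support_iff.1 hb
    rw [h0, map_zero]
    apply Finset.sum_eq_zero
    intro p hp
    rw [Finsupp.single_apply]
    split_ifs with hc
    · exact absurd hp (by rw [bMap_injective ε hc]; exact hb)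
    · rfl

lemma freeOIMap_apply_notin (ε : Fin m ↪o Fin n) (f : FreeOI K c d m) (b' : BIdx d n)
    (hb' : ∀ b, bMap d ε b ≠ b') : (freeOIMap K c d ε f) b' = 0 := by
  classical
  rw [freeOIMap, Finsupp.sum_apply, Finsupp.sum]
  apply Finset.sum_eq_zero
  intro p _
  rw [Finsupp.single_apply]
  split_ifs with hc
  · exact absurd hc (hb' p)
  · rfl

lemma mcoeff_freeOIMap (ε : Fin m ↪o Fin n) (f : FreeOI K c d m) (x : Mon c d m) :
    mcoeff (monMap ε x) (freeOIMap K c d ε f) = mcoeff x f := by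
  rw [mcoeff, mcoeff, monMap, freeOIMap_apply_bMap]
  exact coeff_rename_mapDomain _ (embE_injective ε) _ _

lemma msupp_freeOIMap (ε : Fin m ↪o Fin n) (f : FreeOI K c d m) :
    msupp (freeOIMap K c d ε f) = (msupp f).image (monMap ε) := by
  classical
  ext x
  rw [mem_msupp, Finset.mem_image]
  constructor
  · intro hx
    by_cases hb : ∃ b, bMap d ε b = x.1
    · obtain ⟨b, hbx⟩ := hb
      rw [mcoeff, ← hbx, freeOIMap_apply_bMap] at hx
      obtain ⟨u, hu1, hu2⟩ := coeff_rename_ne_zero _ _ _ hx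
      refine ⟨(b, u), mem_msupp.2 hu2, ?_⟩
      rw [monMap]
      exact Prod.ext hbx hu1
    · push_neg at hb
      exact absurd (by rw [mcoeff, freeOIMap_apply_notin ε f x.1 hb]; simp) hx
  · rintro ⟨y, hy, rfl⟩
    rw [mcoeff_freeOIMap]
    exact mem_msupp.1 hy

lemma mcoeff_monomial_smul (w : Expo c n) (q : K) (f : FreeOI K c d n) (x : Mon c d n) :
    mcoeff (x.1, w + x.2) ((monomial w q : POI K c n) • f) = q * mcoeff x f := by
  rw [mcoeff, mcoeff, Finsupp.smul_apply, smul_eq_mul]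
  exact coeff_monomial_mul _ _ _ _

lemma msupp_monomial_smul (w : Expo c n) {q : K} (hq : q ≠ 0) (f : FreeOI K c d n) :
    msupp ((monomial w q : POI K c n) • f)
      = (msupp f).image (fun y : Mon c d n => (y.1, w + y.2)) := by
  classical
  ext x
  rw [mem_msupp, Finset.mem_image]
  constructor
  · intro hx
    rw [mcoeff, Finsupp.smul_apply, smul_eq_mul, mul_comm, coeff_mul_monomial'] at hx
    by_cases hw : w ≤ x.2
    · rw [if_pos hw] at hx
      refine ⟨(x.1, x.2 - w), mem_msupp.2 ?_, ?_⟩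
      · intro h0
        rw [mcoeff] at h0
        rw [h0, zero_mul] at hx
        exact hx rfl
      · have : w + (x.2 - w) = x.2 := add_tsub_cancel_of_le hw
        rw [this]
    · rw [if_neg hw] at hx
      exact absurd rfl hx
  · rintro ⟨y, hy, rfl⟩
    rw [mcoeff_monomial_smul]
    exact mul_ne_zero hq (mem_msupp.1 hy)

end Coeffs

section WQO
variable {r : ℕ} {d : Fin r → ℕ} {c : ℕ}

abbrev MonW (c : ℕ) (d : Fin r → ℕ) := Σ n : ℕ, Mon c d n

/-- OI-divisibility between monomials in different widths. -/
def OIdvd (s t : MonW c d) : Prop :=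
  ∃ ε : Fin s.1 ↪o Fin t.1, t.2.1 = bMap d ε s.2.1 ∧ ∃ w, t.2.2 = w + expMap c ε s.2.2

lemma oe_eq_of_forall_exists {k n : ℕ} {ρ σ : Fin k ↪o Fin n}
    (h : ∀ x, (∃ a, ρ a = x) ↔ ∃ a, σ a = x) : ρ = σ := by
  suffices key : ∀ t : ℕ, ∀ a : Fin k, a.val ≤ t → ρ a = σ a by
    exact DFunLike.coe_injective (funext fun a => key a.val a le_rfl)
  intro t
  induction t using Nat.strong_induction_on with
  | _ t IH =>
    intro a hat
    by_contra hne
    rcases lt_or_gt_of_ne hne with hlt | hlt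
    · obtain ⟨x, hx⟩ := (h (ρ a)).1 ⟨a, rfl⟩
      have hxa : x < a := σ.strictMono.lt_iff_lt.1 (by rw [hx]; exact hlt)
      have hx2 : ρ x = σ x := IH x.val (lt_of_lt_of_le hxa hat) x le_rfl
      have : ρ x = ρ a := by rw [hx2, hx]
      exact absurd (ρ.injective this) (ne_of_lt hxa)
    · obtain ⟨x, hx⟩ := (h (σ a)).2 ⟨a, rfl⟩
      have hxa : x < a := ρ.strictMono.lt_iff_lt.1 (by rw [hx]; exact hlt)
      have hx2 : ρ x = σ x := IH x.val (lt_of_lt_of_le hxa hat) x le_rfl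
      have : σ x = σ a := by rw [← hx2, hx]
      exact absurd (σ.injective this) (ne_of_lt hxa)

lemma oe_eq_of_range_subset {k n : ℕ} {ρ σ : Fin k ↪o Fin n}
    (h : ∀ a, ∃ b, σ b = ρ a) : ρ = σ := by
  classical
  have hA : (Finset.univ.image ρ : Finset (Fin n)) ⊆ Finset.univ.image σ := by
    intro x hx
    obtain ⟨a, _, rfl⟩ := Finset.mem_image.1 hx
    obtain ⟨b, hb⟩ := h a
    exact Finset.mem_image.2 ⟨b, Finset.mem_univ b, hb⟩
  have hcard : (Finset.univ.image σ : Finset (Fin n)).card ≤ (Finset.univ.image ρ).card := by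
    rw [Finset.card_image_of_injective _ σ.injective,
      Finset.card_image_of_injective _ ρ.injective]
  have hEq : (Finset.univ.image ρ : Finset (Fin n)) = Finset.univ.image σ :=
    Finset.eq_of_subset_of_card_le hA hcard
  apply oe_eq_of_forall_exists
  intro x
  constructor
  · rintro ⟨a, rfl⟩
    have : ρ a ∈ Finset.univ.image σ := by
      rw [← hEq]; exact Finset.mem_image.2 ⟨a, Finset.mem_univ a, rfl⟩
    obtain ⟨b, _, hb⟩ := Finset.mem_image.1 this
    exact ⟨b, hb⟩
  · rintro ⟨a, rfl⟩
    have : σ a ∈ Finset.univ.image ρ := by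
      rw [hEq]; exact Finset.mem_image.2 ⟨a, Finset.mem_univ a, rfl⟩
    obtain ⟨b, _, hb⟩ := Finset.mem_image.1 this
    exact ⟨b, hb⟩

abbrev Alpha (c : ℕ) := Bool × (Fin c → ℕ)

noncomputable def letter (t : MonW c d) (j : Fin t.1) : Alpha c :=
  (decide (∃ k, t.2.1.2 k = j), fun i => t.2.2 (i, j))

noncomputable def word (t : MonW c d) : List (Alpha c) := List.ofFn (letter t)

/-- cast order embedding between `Fin`s of equal size. -/
def castOE {a b : ℕ} (h : a = b) : Fin a ↪o Fin b := (Fin.castOrderIso h).toOrderEmbedding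

lemma decode {s t : MonW c d} (h1 : s.2.1.1 = t.2.1.1)
    (h2 : List.SublistForall₂ (· ≤ ·) (word s) (word t)) : OIdvd s t := by
  obtain ⟨m, ⟨⟨i, π⟩, u⟩⟩ := s
  obtain ⟨n, ⟨⟨i', π'⟩, v⟩⟩ := t
  dsimp only at h1 h2 ⊢
  subst h1
  obtain ⟨l, hfa, hsub⟩ := List.sublistForall₂_iff.1 h2
  obtain ⟨emb, hemb⟩ := List.sublist_iff_exists_fin_orderEmbedding_get_eq.1 hsub
  have hlen1 : m = l.length := by
    have := hfa.length_eq
    rwa [word, List.length_ofFn] at this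
  have hlen2 : (word (⟨n, ⟨⟨i, π'⟩, v⟩⟩ : MonW c d)).length = n := by
    rw [word, List.length_ofFn]
  set ε : Fin m ↪o Fin n := (castOE hlen1).trans (emb.trans (castOE hlen2)) with hεdef
  have hpt : ∀ j : Fin m,
      letter (⟨m, ⟨⟨i, π⟩, u⟩⟩ : MonW c d) j ≤ letter (⟨n, ⟨⟨i, π'⟩, v⟩⟩ : MonW c d) (ε j) := by
    intro j
    have hjlt : j.val < (word (⟨m, ⟨⟨i, π⟩, u⟩⟩ : MonW c d)).length := by
      rw [word, List.length_ofFn]; exact j.isLt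
    have hjlt2 : j.val < l.length := hlen1 ▸ j.isLt
    have e1 : (word (⟨m, ⟨⟨i, π⟩, u⟩⟩ : MonW c d)).get ⟨j.val, hjlt⟩
        = letter (⟨m, ⟨⟨i, π⟩, u⟩⟩ : MonW c d) j :=
      (List.get_ofFn _ _).trans (congrArg (letter (⟨m, ⟨⟨i, π⟩, u⟩⟩ : MonW c d)) (Fin.ext rfl))
    have e2 := List.forall₂_iff_get.1 hfa |>.2 j.val hjlt hjlt2
    have e3 := hemb ⟨j.val, hjlt2⟩
    have e4 : (word (⟨n, ⟨⟨i, π'⟩, v⟩⟩ : MonW c d)).get (emb ⟨j.val, hjlt2⟩)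
        = letter (⟨n, ⟨⟨i, π'⟩, v⟩⟩ : MonW c d) (ε j) :=
      (List.get_ofFn _ _).trans (congrArg (letter (⟨n, ⟨⟨i, π'⟩, v⟩⟩ : MonW c d)) (Fin.ext rfl))
    rw [e1] at e2
    rw [e3, e4] at e2
    exact e2
  have hmark : ∀ k : Fin (d i), ∃ k', π' k' = ε (π k) := by
    intro k
    have hb := (Prod.le_def.1 (hpt (π k))).1
    have htrue : decide (∃ k0 : Fin (d i), π k0 = π k) = true := by
      rw [decide_eq_true_eq]; exact ⟨k, rfl⟩
    rw [letter, letter] at hb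
    simp only at hb
    rw [htrue] at hb
    have := Bool.le_iff_imp.1 hb rfl
    rwa [decide_eq_true_eq] at this
  have hexp : expMap c ε u ≤ v := by
    rw [Finsupp.le_def]
    intro q
    by_cases hq : q ∈ Set.range (embE c ε)
    · obtain ⟨p, rfl⟩ := hq
      rw [expMap, Finsupp.mapDomain_apply (embE_injective ε)]
      have hv := (Prod.le_def.1 (hpt p.2)).2
      have := hv p.1
      rw [letter, letter] at this
      simp only at this
      exact this
    · rw [expMap, Finsupp.mapDomain_notin_range _ _ hq]
      exact Nat.zero_le _
  refine ⟨ε, ?_, ?_⟩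
  · have hππ : π.trans ε = π' := oe_eq_of_range_subset (fun a => hmark a)
    rw [bMap, ← hππ]
  · exact ⟨v - expMap c ε u, (tsub_add_cancel_of_le hexp).symm⟩

end WQO

section WQO2
variable {r : ℕ} {d : Fin r → ℕ} {c : ℕ}

lemma oidvd_wqo (f : ℕ → MonW c d) : ∃ i j : ℕ, i < j ∧ OIdvd (f i) (f j) := by
  classical
  have h1 : (Set.univ : Set Bool).IsPWO := Set.finite_univ.isPWO
  have h2 : (Set.univ : Set (Fin c → ℕ)).IsPWO :=
    Set.isPWO_univ_iff.2 inferInstance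
  have pwoA : (Set.univ : Set (Alpha c)).PartiallyWellOrderedOn (· ≤ ·) := by
    have h3 := h1.prod h2
    rwa [Set.univ_prod_univ] at h3
  have hig := pwoA.partiallyWellOrderedOn_sublistForall₂ (· ≤ ·)
  have pwoFin : (Set.univ : Set (Fin r)).PartiallyWellOrderedOn (· = ·) := by
    rw [Set.partiallyWellOrderedOn_iff_exists_lt]
    intro g _
    obtain ⟨i, j, hne, heq⟩ := Finite.exists_ne_map_eq_of_infinite g
    rcases lt_or_gt_of_ne hne with h | h
    · exact ⟨i, j, h, heq⟩
    · exact ⟨j, i, h, heq.symm⟩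
  have pwoP := pwoFin.prod hig
  obtain ⟨i, j, hij, hrel⟩ := pwoP.exists_lt (f := fun k => ((f k).2.1.1, word (f k))) (fun k => by
    refine Set.mk_mem_prod (Set.mem_univ _) ?_
    intro x _
    exact Set.mem_univ x)
  exact ⟨i, j, hij, decode hrel.1 hrel.2⟩

/-- From a wqo, every set has a finite dominating subset. -/
lemma exists_finite_dominating {α : Type*} (rel : α → α → Prop) (s : Set α)
    (hwqo : ∀ f : ℕ → α, (∀ k, f k ∈ s) → ∃ i j : ℕ, i < j ∧ rel (f i) (f j)) :
    ∃ F : Finset α, ↑F ⊆ s ∧ ∀ t ∈ s, ∃ a ∈ F, rel a t := by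
  classical
  by_contra hcon
  push_neg at hcon
  have pick : ∀ l : List α, (∀ a ∈ l, a ∈ s) → ∃ t, t ∈ s ∧ ∀ a ∈ l, ¬ rel a t := by
    intro l hl
    obtain ⟨t, ht, ht2⟩ := hcon l.toFinset (by
      intro a ha
      exact hl a (by simpa using ha))
    exact ⟨t, ht, fun a ha => ht2 a (List.mem_toFinset.2 ha)⟩
  let seq : ℕ → {l : List α // ∀ a ∈ l, a ∈ s} := fun n =>
    Nat.rec ⟨[], by simp⟩ (fun _ p =>
      ⟨p.1 ++ [(pick p.1 p.2).choose], by
        intro a ha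
        rcases List.mem_append.1 ha with h | h
        · exact p.2 a h
        · rw [List.mem_singleton.1 h]
          exact (pick p.1 p.2).choose_spec.1⟩) n
  let f : ℕ → α := fun n => (pick (seq n).1 (seq n).2).choose
  have hseq : ∀ n, (seq (n+1)).1 = (seq n).1 ++ [f n] := fun n => rfl
  have hmem : ∀ i n, i < n → f i ∈ (seq n).1 := by
    intro i n
    induction n with
    | zero => omega
    | succ n IH =>
      intro hin
      rw [hseq n]
      rcases Nat.lt_succ_iff_lt_or_eq.1 hin with h | h
      · exact List.mem_append.2 (Or.inl (IH h))
      · subst h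
        exact List.mem_append.2 (Or.inr (List.mem_singleton.2 rfl))
  have hfs : ∀ n, f n ∈ s := fun n => (pick (seq n).1 (seq n).2).choose_spec.1
  obtain ⟨i, j, hij, hrel⟩ := hwqo f hfs
  exact (pick (seq j).1 (seq j).2).choose_spec.2 (f i) (hmem i j hij) hrel

end WQO2

section Main
variable {K : Type} [Field K] {c : ℕ} {r : ℕ} {d : Fin r → ℕ}

lemma ne_zero_of_mcoeff {n : ℕ} {x : Mon c d n} {f : FreeOI K c d n}
    (h : mcoeff x f ≠ 0) : f ≠ 0 := by
  intro h0
  subst h0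
  exact h (by simp [mcoeff])

lemma ne_zero_of_mem_msupp {n : ℕ} {x : Mon c d n} {f : FreeOI K c d n}
    (h : x ∈ msupp f) : f ≠ 0 := ne_zero_of_mcoeff (mem_msupp.1 h)

theorem main_noetherian (N : ∀ n, Submodule (POI K c n) (FreeOI K c d n))
    (hN : ∀ (m n : ℕ) (ε : Fin m ↪o Fin n) (x : FreeOI K c d m),
      x ∈ N m → freeOIMap K c d ε x ∈ N n) :
    ∃ (k : ℕ) (w : Fin k → ℕ) (g : ∀ i, FreeOI K c d (w i)),
      (∀ i, g i ∈ N (w i)) ∧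
      ∀ S : ∀ n, Submodule (POI K c n) (FreeOI K c d n),
        (∀ (m n : ℕ) (ε : Fin m ↪o Fin n) (x : FreeOI K c d m),
          x ∈ S m → freeOIMap K c d ε x ∈ S n) →
        (∀ i, g i ∈ S (w i)) →
        ∀ (n : ℕ) (x : FreeOI K c d n), x ∈ N n → x ∈ S n := by
  classical
  set L : Set (MonW c d) :=
    {t | ∃ x : FreeOI K c d t.1, x ∈ N t.1 ∧ ∃ hx : x ≠ 0, lmon x hx = t.2} with hLdef
  obtain ⟨F, hFsub, hFdom⟩ := exists_finite_dominating OIdvd L (fun f _ => oidvd_wqo f)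
  set lst := F.toList with hlst
  have hmemL : ∀ i : Fin lst.length, lst.get i ∈ L :=
    fun i => hFsub (Finset.mem_toList.1 (lst.get_mem i))
  refine ⟨lst.length, fun i => (lst.get i).1, fun i => (hmemL i).choose, ?_, ?_⟩
  · exact fun i => (hmemL i).choose_spec.1
  intro S hS hgS n x hxN
  have hG0 : ∀ i : Fin lst.length, (hmemL i).choose ≠ 0 :=
    fun i => (hmemL i).choose_spec.2.choose
  have hGlm : ∀ i : Fin lst.length,
      lmon (hmemL i).choose (hG0 i) = (lst.get i).2 :=
    fun i => (hmemL i).choose_spec.2.choose_spec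
  have wf : WellFounded ((· < ·) : Mon c d n → Mon c d n → Prop) := IsWellFounded.wf
  have key : ∀ mo : Mon c d n, ∀ y : FreeOI K c d n, ∀ hy0 : y ≠ 0,
      y ∈ N n → lmon y hy0 = mo → y ∈ S n := by
    intro mo
    refine wf.induction
      (C := fun mo => ∀ y : FreeOI K c d n, ∀ hy0 : y ≠ 0,
        y ∈ N n → lmon y hy0 = mo → y ∈ S n) mo ?_
    intro mo IH y hy0 hyN hylm
    have htL : (⟨n, mo⟩ : MonW c d) ∈ L := ⟨y, hyN, hy0, hylm⟩
    obtain ⟨a, haF, hadvd⟩ := hFdom _ htL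
    obtain ⟨idx, hidx⟩ := List.mem_iff_get.1 (Finset.mem_toList.2 haF)
    subst hidx
    obtain ⟨ε, hb, wexp, hu⟩ := hadvd
    set G := (hmemL idx).choose with hGdef
    have hGN : G ∈ N (lst.get idx).1 := (hmemL idx).choose_spec.1
    -- the image of G under the OI-map
    have hmapsupp := msupp_freeOIMap (K := K) ε G
    have hmap0 : freeOIMap K c d ε G ≠ 0 := by
      apply ne_zero_of_mem_msupp (x := monMap ε (lmon G (hG0 idx)))
      rw [hmapsupp]
      exact Finset.mem_image_of_mem _ (lmon_mem (hG0 idx))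
    have hmaplm : lmon (freeOIMap K c d ε G) hmap0 = monMap ε (lmon G (hG0 idx)) :=
      lmon_map_eq (hG0 idx) hmap0 (monMap_strictMono ε).monotone hmapsupp
    -- the coefficient
    have hcy : mcoeff mo y ≠ 0 := by rw [← hylm]; exact mcoeff_lmon hy0
    have hcG : mcoeff ((lst.get idx).2) G ≠ 0 := by
      rw [← hGlm idx]; exact mcoeff_lmon (hG0 idx)
    set q : K := mcoeff mo y / mcoeff ((lst.get idx).2) G with hqdef
    have hq : q ≠ 0 := div_ne_zero hcy hcG
    set z : FreeOI K c d n := (monomial wexp q : POI K c n) • freeOIMap K c d ε G with hzdef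
    have hzsupp : msupp z = (msupp (freeOIMap K c d ε G)).image
        (fun y : Mon c d n => (y.1, wexp + y.2)) := msupp_monomial_smul wexp hq _
    have hshift : StrictMono (fun y : Mon c d n => ((y.1, wexp + y.2) : Mon c d n)) :=
      fun a b h => mon_lt_shift wexp h
    have hz0 : z ≠ 0 := by
      apply ne_zero_of_mem_msupp
        (x := ((monMap ε (lmon G (hG0 idx))).1, wexp + (monMap ε (lmon G (hG0 idx))).2))
      rw [hzsupp]
      apply Finset.mem_image_of_mem
      rw [← hmaplm]
      exact lmon_mem hmap0
    have hzlm : lmon z hz0 = mo := by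
      have h1 : lmon z hz0 = ((monMap ε (lmon G (hG0 idx))).1,
          wexp + (monMap ε (lmon G (hG0 idx))).2) := by
        have := lmon_map_eq hmap0 hz0 hshift.monotone hzsupp
        rw [this, hmaplm]
      rw [h1, hGlm idx]
      exact (Prod.ext hb hu).symm
    have hzc : mcoeff mo z = mcoeff mo y := by
      have h2 : mo = (((lst.get idx).2 : Mon c d (lst.get idx).1) |>
          fun t2 => ((bMap d ε t2.1, wexp + expMap c ε t2.2) : Mon c d n)) :=
        Prod.ext hb hu
      have h3 : mcoeff ((monMap ε ((lst.get idx).2)).1,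
            wexp + (monMap ε ((lst.get idx).2)).2) z
          = q * mcoeff (monMap ε ((lst.get idx).2)) (freeOIMap K c d ε G) :=
        mcoeff_monomial_smul wexp q _ _
      rw [mcoeff_freeOIMap] at h3
      have h4 : mcoeff mo z = q * mcoeff ((lst.get idx).2) G := by
        rw [h2]; exact h3
      rw [h4, hqdef, div_mul_cancel₀ _ hcG]
    have hzS : z ∈ S n := Submodule.smul_mem _ _ (hS _ n ε G (hgS idx))
    have hzN : z ∈ N n := Submodule.smul_mem _ _ (hN _ n ε G hGN)
    by_cases hyz : y = z
    · rw [hyz]; exact hzS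
    · have hy2 : y - z ≠ 0 := sub_ne_zero.2 hyz
      have hlt : lmon (y - z) hy2 < mo := by
        rw [← hylm]
        exact lmon_sub_lt hy0 hz0 hyz (by rw [hylm, hzlm])
          (by rw [hylm, hzlm, hzc])
      have hy2N : y - z ∈ N n := sub_mem hyN hzN
      have hy2S : y - z ∈ S n := IH _ hlt _ hy2 hy2N rfl
      have : y = (y - z) + z := by abel
      rw [this]
      exact add_mem hy2S hzS
  by_cases hx0 : x = 0
  · rw [hx0]; exact (S n).zero_mem
  · exact key (lmon x hx0) x hx0 hxN rfl

end Main

end OIAux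

/-- Let `K` be a field, `c ≥ 0`, and let `φ : G → F` be a morphism
of finitely generated free OI-modules over `P = P^{OI,c}` (with `G = ⊕_{i=1}^{rG}
F^{OI,dG_i}` and `F = ⊕_{i=1}^{rF} F^{OI,dF_i}`): a family of `P_n`-linear maps
commuting with the OI-structure maps. Then the kernel of `φ` — the OI-submodule of
`G` with width-`n` component `ker (φ n)` — is generated by a finite subset: there
are finitely many elements `g_1, …, g_k` of the kernel, in widths `w_1, …, w_k`,
such that every OI-stable family of submodules containing them contains the whole
kernel. (Moreover such a finite generating set can be computed in finitely many
steps.) -/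

theorem stmt_8 (K : Type) [Field K] (c : ℕ) {rG rF : ℕ}
    (dG : Fin rG → ℕ) (dF : Fin rF → ℕ)
    (φ : ∀ n, FreeOI K c dG n →ₗ[POI K c n] FreeOI K c dF n)
    (hφnat : ∀ {m n : ℕ} (ε : Fin m ↪o Fin n) (x : FreeOI K c dG m),
      φ n (freeOIMap K c dG ε x) = freeOIMap K c dF ε (φ m x)) :
    ∃ (k : ℕ) (w : Fin k → ℕ) (g : ∀ i, FreeOI K c dG (w i)),
      (∀ i, φ (w i) (g i) = 0) ∧
      ∀ S : ∀ n, Submodule (POI K c n) (FreeOI K c dG n),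
        (∀ (m n : ℕ) (ε : Fin m ↪o Fin n) (x : FreeOI K c dG m),
          x ∈ S m → freeOIMap K c dG ε x ∈ S n) →
        (∀ i, g i ∈ S (w i)) →
        ∀ (n : ℕ) (x : FreeOI K c dG n), φ n x = 0 → x ∈ S n := by
  have hker : ∀ (m n : ℕ) (ε : Fin m ↪o Fin n) (x : FreeOI K c dG m),
      x ∈ LinearMap.ker (φ m) → freeOIMap K c dG ε x ∈ LinearMap.ker (φ n) := by
    intro m n ε x hx
    rw [LinearMap.mem_ker] at hx ⊢
    rw [hφnat ε x, hx]
    simp [freeOIMap]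
  obtain ⟨k, w, g, hg1, hg2⟩ := main_noetherian (fun n => LinearMap.ker (φ n)) hker
  refine ⟨k, w, g, fun i => LinearMap.mem_ker.1 (hg1 i), ?_⟩
  intro S hSstab hgS n x hx
  exact hg2 S hSstab hgS n x (LinearMap.mem_ker.2 hx)
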